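/- Let t*(n) = ⌊π/(2·arccos(λ(n)))⌋ where λ(n) = (n−2+√(n²+4n−4))/(2n). Then t*(n) = Θ(n), i.e., there exist N ∈ ℕ and positive constants c₁, c₂ such that c₁·n ≤ t*(n) ≤ c₂·n for all n ≥ N. -/

import Mathlib

theorem measurement_time_bigTheta :
    ∃ (N : ℕ) (c₁ c₂ : ℝ), 0 < c₁ ∧ 0 < c₂ ∧
      ∀ n ≥ N,
        c₁ * (n : ℝ) ≤
            (⌊Real.pi / (2 * Real.arccos
              (((n : ℝ) - 2 + Real.sqrt ((n : ℝ) ^ 2 + 4 * n - 4)) / (2 * n)))⌋ : ℝ) ∧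
          (⌊Real.pi / (2 * Real.arccos
              (((n : ℝ) - 2 + Real.sqrt ((n : ℝ) ^ 2 + 4 * n - 4)) / (2 * n)))⌋ : ℝ) ≤
            c₂ * (n : ℝ) := by
  refine ⟨4, 1/4, 2, by norm_num, by norm_num, ?_⟩
  intro n hn
  set x : ℝ := (n : ℝ) with hxdef
  have hx : (4 : ℝ) ≤ x := by exact_mod_cast Nat.cast_le.mpr hn
  have hx0 : (0 : ℝ) < x := by linarith
  set s : ℝ := Real.sqrt (x ^ 2 + 4 * x - 4) with hsdef
  have hs0 : 0 ≤ s := Real.sqrt_nonneg _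
  have hs2 : s ^ 2 = x ^ 2 + 4 * x - 4 := Real.sq_sqrt (by nlinarith)
  clear_value s
  have hsl : x ≤ s := by nlinarith
  have hsu : s < x + 2 := by nlinarith
  have hS : x * s ≤ x ^ 2 + 2 * x - 2 := by nlinarith [sq_nonneg (x * s - (x ^ 2 + 2 * x - 2))]
  have hS' : x ^ 2 + 2 * x - 4 ≤ x * s := by nlinarith [sq_nonneg (x * s + (x ^ 2 + 2 * x - 4))]
  set lam : ℝ := (x - 2 + s) / (2 * x) with hlamdef
  have h2x : (0 : ℝ) < 2 * x := by linarith
  have hlam1 : lam < 1 := by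
    rw [hlamdef, div_lt_one h2x]; linarith
  have hlam0 : 0 < lam := by
    rw [hlamdef]; exact div_pos (by linarith) h2x
  have hone_sub : 1 - lam = (x + 2 - s) / (2 * x) := by
    rw [hlamdef]; field_simp; ring
  have hθaux : Real.arccos lam ≤ Real.pi := Real.arccos_le_pi _
  have hB1 : 1 / x ^ 2 ≤ 1 - lam := by
    rw [hone_sub, div_le_div_iff₀ (by positivity) h2x]; nlinarith
  have hB2 : 1 - lam ≤ 2 / x ^ 2 := by
    rw [hone_sub, div_le_div_iff₀ h2x (by positivity)]; nlinarith
  set θ : ℝ := Real.arccos lam with hθdef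
  have hθpos : 0 < θ := Real.arccos_pos.mpr hlam1
  have hθpi : θ ≤ Real.pi := Real.arccos_le_pi _
  have hcos : Real.cos θ = lam := Real.cos_arccos (by linarith) hlam1.le
  clear_value θ
  clear_value lam
  have hpi : (0 : ℝ) < Real.pi := Real.pi_pos
  -- lower bound on θ²: θ² ≥ 2(1-λ) ≥ 2/x²
  have hlow : 2 * (1 - lam) ≤ θ ^ 2 := by
    have := Real.one_sub_sq_div_two_le_cos (x := θ)
    rw [hcos] at this; linarith
  -- θ ≥ 1/x
  have hθge : 1 / x ≤ θ := by
    have h1 : (1 / x) ^ 2 ≤ θ ^ 2 := by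
      rw [div_pow, one_pow]; nlinarith
    have h2 := Real.sqrt_le_sqrt h1
    rwa [Real.sqrt_sq (by positivity), Real.sqrt_sq hθpos.le] at h2
  -- upper bound: cos θ ≤ 1 - 2/π² θ²
  have hhigh : Real.cos θ ≤ 1 - 2 / Real.pi ^ 2 * θ ^ 2 :=
    Real.cos_le_one_sub_mul_cos_sq (by rw [abs_of_nonneg hθpos.le]; exact hθpi)
  have hθ2le : θ ^ 2 ≤ Real.pi ^ 2 / x ^ 2 := by
    rw [hcos] at hhigh
    have h1 : 2 / Real.pi ^ 2 * θ ^ 2 ≤ 2 / x ^ 2 := by linarith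
    have h3 := mul_le_mul_of_nonneg_left h1 (by positivity : (0:ℝ) ≤ Real.pi ^ 2 / 2)
    calc θ ^ 2 = Real.pi ^ 2 / 2 * (2 / Real.pi ^ 2 * θ ^ 2) := by
          field_simp
      _ ≤ Real.pi ^ 2 / 2 * (2 / x ^ 2) := h3
      _ = Real.pi ^ 2 / x ^ 2 := by ring
  have hθle : θ ≤ Real.pi / x := by
    have h2 : (0 : ℝ) < Real.pi / x := by positivity
    have h1 : θ ^ 2 ≤ (Real.pi / x) ^ 2 := by
      rw [div_pow]; exact hθ2le
    have h2 := Real.sqrt_le_sqrt h1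
    rwa [Real.sqrt_sq hθpos.le, Real.sqrt_sq (by positivity)] at h2
  have h2θ : (0 : ℝ) < 2 * θ := by linarith
  set F : ℝ := Real.pi / (2 * θ) with hFdef
  clear_value F
  -- F ≥ x/2
  have hFge : x / 2 ≤ F := by
    rw [hFdef, div_le_div_iff₀ (by norm_num) h2θ]
    have : x * θ ≤ Real.pi := by
      have := mul_le_mul_of_nonneg_left hθle hx0.le
      rw [mul_div_cancel₀ _ hx0.ne'] at this
      linarith [this]
    linarith
  -- F ≤ π x / 2 ≤ 2x
  have hFle : F ≤ 2 * x := by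
    rw [hFdef, div_le_iff₀ h2θ]
    have hxθ : 1 ≤ x * θ := by
      have := mul_le_mul_of_nonneg_left hθge hx0.le
      rw [mul_one_div, div_self hx0.ne'] at this
      linarith
    calc Real.pi ≤ 4 := Real.pi_le_four
      _ ≤ 4 * (x * θ) := by linarith
      _ = 2 * x * (2 * θ) := by ring
  constructor
  · have h1 : F - 1 < (⌊F⌋ : ℝ) := Int.sub_one_lt_floor F
    linarith
  · have h1 : (⌊F⌋ : ℝ) ≤ F := Int.floor_le F
    linarith
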